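/- Energy inequality for E₀ (Lemma 6.1): let η₊, η₋ ∈ (−1/√3, 1/√3) with η₊ ≠ η₋, let η̃ be the mixing profile, and set η₀ = max(|η₊|, |η₋|), η̄ = (η₀ + 1/√3)/2, ā = a(η̄), ε = η̄ − η₀. Let 0 ≤ τ₁ ≤ τ₂ and let (ψ, s) be a solution of system (2.12) on [τ₁, τ₂] × ℝ (smooth, with ψ(τ,·), s(τ,·) Schwartz in ξ for each τ, depending continuously on τ in every Schwartz seminorm) satisfying ‖ψ(τ,·)‖_{H²} + ‖s(τ,·)‖_{H¹} ≤ ε for all τ ∈ [τ₁, τ₂]. Then for every ν > 0 there exists K₂ > 0 such that the function E₀(τ) = (1/2)∫_ℝ ψ(τ,ξ)² dξ is continuously differentiable on [τ₁, τ₂] and satisfies E₀′(τ) ≤ −(3/2 − ν)·E₀(τ) − ā·∫_ℝ (∂ξψ(τ,ξ))² dξ + K₂·∫_ℝ (∂ξs(τ,ξ))² dξ for all τ ∈ [τ₁, τ₂]. -/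

import Mathlib

noncomputable section

open Real Filter MeasureTheory Set Topology SchwartzMap

/-- The coefficient `a(η) = (1 - 3η²)/(1 - η²)`. -/
def aGL (η : ℝ) : ℝ := (1 - 3 * η ^ 2) / (1 - η ^ 2)

/-- The primitive `A(η) = ∫₀^η a(s) ds`. -/
def AGL (η : ℝ) : ℝ := ∫ s in (0:ℝ)..η, aGL s

/-- The coefficient `a₁(η) = (1 + η²)/(1 - η²)`. -/
def a1GL (η : ℝ) : ℝ := (1 + η ^ 2) / (1 - η ^ 2)

/-- The coefficient `a₂(η) = -4η³/(1 - η²)²`. -/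
def a2GL (η : ℝ) : ℝ := -4 * η ^ 3 / (1 - η ^ 2) ^ 2

/-- The coefficient `a₃(η) = -(2 + 6η²)/(1 - η²)³`. -/
def a3GL (η : ℝ) : ℝ := -(2 + 6 * η ^ 2) / (1 - η ^ 2) ^ 3

/-- A mixing profile for boundary values `ηp` (at `+∞`) and `ηm` (at `-∞`). -/
def IsMixingProfile (ηp ηm : ℝ) (e : ℝ → ℝ) : Prop :=
  ContDiff ℝ 2 e ∧
  (∀ ξ, e ξ ∈ Set.Ioo (-(1 / Real.sqrt 3)) (1 / Real.sqrt 3)) ∧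
  (∀ ξ, deriv (deriv (fun x => AGL (e x))) ξ + ξ / 2 * deriv e ξ = 0) ∧
  Filter.Tendsto e Filter.atTop (nhds ηp) ∧
  Filter.Tendsto e Filter.atBot (nhds ηm)

/-- The `H²` norm `(∫ (f² + f'² + f''²))^{1/2}`. -/
def H2norm (f : ℝ → ℝ) : ℝ :=
  Real.sqrt (∫ ξ : ℝ, (f ξ ^ 2 + deriv f ξ ^ 2 + deriv (deriv f) ξ ^ 2))

/-- The `H¹` norm `(∫ (f² + f'²))^{1/2}`. -/
def H1norm (f : ℝ → ℝ) : ℝ :=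
  Real.sqrt (∫ ξ : ℝ, (f ξ ^ 2 + deriv f ξ ^ 2))

/-- A solution `(ψ, s)` of system (2.12) on the time interval `I`, written with
`η(τ,ξ) = η̃(ξ) + ∂ξψ(τ,ξ)`.  For every `τ ∈ I` the functions `ψ(τ,·)`, `s(τ,·)`
are Schwartz functions, depending continuously on `τ` (in the Schwartz
topology, i.e. in every Schwartz seminorm), with pointwise time derivatives
`dΨ`, `dS` which are again Schwartz and continuous in `τ`, and the two
evolution equations hold pointwise. -/
def IsSolution212 (e : ℝ → ℝ) (Ψ S dΨ dS : ℝ → SchwartzMap ℝ ℝ) (I : Set ℝ) : Prop :=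
  ContinuousOn Ψ I ∧ ContinuousOn S I ∧ ContinuousOn dΨ I ∧ ContinuousOn dS I ∧
  (∀ τ ∈ I, ∀ ξ : ℝ, HasDerivWithinAt (fun t => Ψ t ξ) (dΨ τ ξ) I τ) ∧
  (∀ τ ∈ I, ∀ ξ : ℝ, HasDerivWithinAt (fun t => S t ξ) (dS τ ξ) I τ) ∧
  (∀ τ ∈ I, ∀ ξ : ℝ,
    dΨ τ ξ =
      deriv (fun x => AGL (e x + deriv (Ψ τ) x) - AGL (e x)) ξ
      + ξ / 2 * deriv (Ψ τ) ξ - (1 / 2) * Ψ τ ξ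
      + (e ξ + deriv (Ψ τ) ξ) * deriv (S τ) ξ) ∧
  (∀ τ ∈ I, ∀ ξ : ℝ,
    dS τ ξ =
      a1GL (e ξ + deriv (Ψ τ) ξ) * deriv (deriv (S τ)) ξ
      + a2GL (e ξ + deriv (Ψ τ) ξ) * deriv (deriv (fun x => e x + deriv (Ψ τ) x)) ξ
      + ξ / 2 * deriv (S τ) ξ
      - 2 * Real.exp τ * (1 - (e ξ + deriv (Ψ τ) ξ) ^ 2) * (Real.exp (S τ ξ) - 1)
      + (1 / 2) * (deriv (S τ) ξ) ^ 2
      + a3GL (e ξ + deriv (Ψ τ) ξ) * (deriv (fun x => e x + deriv (Ψ τ) x) ξ) ^ 2)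

lemma one_sub_sq_pos {x : ℝ} (hx : |x| < 1) : 0 < 1 - x ^ 2 := by
  nlinarith [abs_nonneg x, sq_abs x, abs_lt.1 hx]

lemma aGL_continuousAt {x : ℝ} (hx : |x| < 1) : ContinuousAt aGL x := by
  have h := one_sub_sq_pos hx
  exact ContinuousAt.div (by fun_prop) (by fun_prop) (by positivity)

lemma aGL_continuousOn : ContinuousOn aGL (Set.Ioo (-1:ℝ) 1) := fun x hx =>
  (aGL_continuousAt (abs_lt.2 ⟨hx.1, hx.2⟩)).continuousWithinAt

lemma aGL_anti {x y : ℝ} (hxy : |x| ≤ |y|) (hy : |y| < 1) : aGL y ≤ aGL x := by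
  have hx : |x| < 1 := lt_of_le_of_lt hxy hy
  have h1 := one_sub_sq_pos hx
  have h2 := one_sub_sq_pos hy
  rw [aGL, aGL, div_le_div_iff₀ h2 h1]
  have hsq : x ^ 2 ≤ y ^ 2 := by
    rw [← sq_abs x, ← sq_abs y]
    exact pow_le_pow_left₀ (abs_nonneg x) hxy 2
  nlinarith

lemma sq_lt_third {x : ℝ} (hx : |x| < 1 / Real.sqrt 3) : 3 * x ^ 2 < 1 := by
  have h3 : (0:ℝ) < Real.sqrt 3 := Real.sqrt_pos.2 (by norm_num)
  have h1 : |x| * Real.sqrt 3 < 1 := by rw [← lt_div_iff₀ h3]; exact hx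
  have h2 : (|x| * Real.sqrt 3) ^ 2 < 1 := by
    nlinarith [mul_nonneg (abs_nonneg x) h3.le]
  have h4 : Real.sqrt 3 ^ 2 = 3 := Real.sq_sqrt (by norm_num)
  nlinarith [sq_abs x]

lemma abs_lt_one_of_lt_third {x : ℝ} (hx : |x| < 1 / Real.sqrt 3) : |x| < 1 := by
  have := sq_lt_third hx
  nlinarith [abs_nonneg x, sq_abs x]

lemma aGL_pos {x : ℝ} (hx : |x| < 1 / Real.sqrt 3) : 0 < aGL x := by
  have := sq_lt_third hx
  exact div_pos (by linarith) (one_sub_sq_pos (abs_lt_one_of_lt_third hx))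

lemma aGL_le_one {x : ℝ} (hx : |x| < 1) : aGL x ≤ 1 := by
  have h := one_sub_sq_pos hx
  rw [aGL, div_le_one h]
  nlinarith [sq_nonneg x]

lemma uIcc_subset_Ioo_of_abs {x y : ℝ} (hb : |x| < 1) (hy : |y| < 1) :
    Set.uIcc x y ⊆ Set.Ioo (-1:ℝ) 1 := by
  intro z hz
  rcases hz with ⟨h1, h2⟩
  have hx := abs_lt.1 hb
  have hy' := abs_lt.1 hy
  constructor
  · have : min x y ≤ z := h1
    have : (-1:ℝ) < min x y := lt_min hx.1 hy'.1
    linarith [le_trans this.le h1]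
  · have : z ≤ max x y := h2
    have hm : max x y < 1 := max_lt hx.2 hy'.2
    linarith

lemma aGL_intervalIntegrable {x y : ℝ} (hx : |x| < 1) (hy : |y| < 1) :
    IntervalIntegrable aGL volume x y :=
  (aGL_continuousOn.mono (uIcc_subset_Ioo_of_abs hx hy)).intervalIntegrable

lemma hasDerivAt_AGL {x : ℝ} (hx : |x| < 1) : HasDerivAt AGL (aGL x) x := by
  have hint : IntervalIntegrable aGL volume 0 x :=
    aGL_intervalIntegrable (by norm_num) hx
  have hmeas : StronglyMeasurableAtFilter aGL (𝓝 x) := by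
    have := ContinuousOn.stronglyMeasurableAtFilter (μ := volume) isOpen_Ioo aGL_continuousOn
    exact this x (abs_lt.1 hx)
  exact intervalIntegral.integral_hasDerivAt_right hint hmeas (aGL_continuousAt hx)

/-- Chord estimate: `t * (A(x+t) - A(x)) ≥ a(ηb) * t²` when everything stays in `[-ηb, ηb]`. -/
lemma AGL_chord {ηb x t : ℝ} (hb1 : |ηb| < 1) (hx : |x| ≤ ηb) (hxt : |x + t| ≤ ηb) :
    aGL ηb * t ^ 2 ≤ t * (AGL (x + t) - AGL x) := by
  have hxx : |x| < 1 := lt_of_le_of_lt hx (lt_of_abs_lt hb1)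
  have hxt1 : |x + t| < 1 := lt_of_le_of_lt hxt (lt_of_abs_lt hb1)
  have key : AGL (x + t) - AGL x = ∫ s in x..(x+t), aGL s := by
    have := intervalIntegral.integral_add_adjacent_intervals
      (aGL_intervalIntegrable (x := 0) (by norm_num) hxx) (aGL_intervalIntegrable hxx hxt1)
    rw [AGL, AGL]; linarith [this]
  rw [key]
  have hmem : ∀ s ∈ Set.uIcc x (x + t), aGL ηb ≤ aGL s := by
    intro s hs
    have h1 : |s| ≤ ηb := by
      rcases hs with ⟨h1, h2⟩
      rw [abs_le]
      constructor
      · calc -ηb ≤ min x (x+t) := le_min (neg_le_of_abs_le hx) (neg_le_of_abs_le hxt)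
          _ ≤ s := h1
      · calc s ≤ max x (x+t) := h2
          _ ≤ ηb := max_le (le_of_abs_le hx) (le_of_abs_le hxt)
    exact aGL_anti (le_trans h1 (le_abs_self ηb)) hb1
  rcases le_or_gt 0 t with ht | ht
  · have hmono : (x + t) - x = t := by ring
    have h1 : ∫ s in x..(x+t), (aGL ηb) ≤ ∫ s in x..(x+t), aGL s := by
      apply intervalIntegral.integral_mono_on (by linarith)
        intervalIntegrable_const (aGL_intervalIntegrable hxx hxt1)
      intro s hs
      exact hmem s (by rw [Set.uIcc_of_le (by linarith : x ≤ x + t)]; exact hs)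
    rw [intervalIntegral.integral_const, smul_eq_mul, hmono] at h1
    nlinarith
  · have h1 : ∫ s in (x+t)..x, (aGL ηb) ≤ ∫ s in (x+t)..x, aGL s := by
      apply intervalIntegral.integral_mono_on (by linarith)
        intervalIntegrable_const (aGL_intervalIntegrable hxt1 hxx)
      intro s hs
      exact hmem s (by rw [Set.uIcc_comm, Set.uIcc_of_le (by linarith : x + t ≤ x)]; exact hs)
    rw [intervalIntegral.integral_const, smul_eq_mul] at h1
    rw [show (∫ s in x..x+t, aGL s) = -∫ s in (x+t)..x, aGL s from
      intervalIntegral.integral_symm _ _]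
    nlinarith


def adGL (x : ℝ) : ℝ := -4 * x / (1 - x ^ 2) ^ 2

lemma hasDerivAt_aGL {x : ℝ} (hx : |x| < 1) : HasDerivAt aGL (adGL x) x := by
  have h := one_sub_sq_pos hx
  have h1 : HasDerivAt (fun y : ℝ => 1 - 3 * y ^ 2) (-(3 * (2 * x))) x := by
    simpa using ((hasDerivAt_pow 2 x).const_mul (3:ℝ)).const_sub 1
  have h2 : HasDerivAt (fun y : ℝ => 1 - y ^ 2) (-(2 * x)) x := by
    simpa using (hasDerivAt_pow 2 x).const_sub 1
  have h3 := h1.div h2 (by positivity)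
  refine HasDerivAt.congr_deriv h3 ?_
  rw [adGL]; congr 1; ring

lemma adGL_continuousAt {x : ℝ} (hx : |x| < 1) : ContinuousAt adGL x := by
  have h := one_sub_sq_pos hx
  exact ContinuousAt.div (by fun_prop) (by fun_prop) (by positivity)

lemma profile_abs_le {ηp ηm : ℝ} {e : ℝ → ℝ}
    (hne : ηp ≠ ηm) (he : IsMixingProfile ηp ηm e) :
    ∀ ξ, |e ξ| ≤ max |ηp| |ηm| := by
  obtain ⟨hC2, hrange, heq, htop, hbot⟩ := he
  have habs : ∀ ξ, |e ξ| < 1 / Real.sqrt 3 := fun ξ => abs_lt.2 ⟨(hrange ξ).1, (hrange ξ).2⟩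
  have habs1 : ∀ ξ, |e ξ| < 1 := fun ξ => abs_lt_one_of_lt_third (habs ξ)
  have hde : Differentiable ℝ e := hC2.differentiable (by norm_num)
  have hce : Continuous e := hde.continuous
  have hd1 : ContDiff ℝ 1 (deriv e) := by
    have h2 : ContDiff ℝ (1 + 1) e := by
      have h12 : ((1:WithTop ℕ∞) + 1) = 2 := by norm_num
      rw [h12]; exact hC2
    exact (contDiff_succ_iff_deriv.mp h2).2.2
  have hde' : Differentiable ℝ (deriv e) := hd1.differentiable one_ne_zero
  have hcontd : Continuous (deriv e) := hde'.continuous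
  have hAe : ∀ ξ, HasDerivAt (fun x => AGL (e x)) (aGL (e ξ) * deriv e ξ) ξ := fun ξ =>
    (hasDerivAt_AGL (habs1 ξ)).comp ξ (hde ξ).hasDerivAt
  have hAe' : deriv (fun x => AGL (e x)) = fun ξ => aGL (e ξ) * deriv e ξ :=
    funext fun ξ => (hAe ξ).deriv
  have hAe2 : ∀ ξ, HasDerivAt (fun x => aGL (e x) * deriv e x)
      (adGL (e ξ) * deriv e ξ * deriv e ξ + aGL (e ξ) * deriv (deriv e) ξ) ξ := fun ξ =>
    ((hasDerivAt_aGL (habs1 ξ)).comp ξ (hde ξ).hasDerivAt).mul (hde' ξ).hasDerivAt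
  set V : ℝ → ℝ → ℝ := fun t y => -(adGL (e t) * y ^ 2 + t / 2 * y) / aGL (e t) with hV
  have hODE : ∀ ξ, HasDerivAt (deriv e) (V ξ (deriv e ξ)) ξ := by
    intro ξ
    have h0 := heq ξ
    rw [hAe'] at h0
    have h1 : deriv (fun ξ => aGL (e ξ) * deriv e ξ) ξ
        = adGL (e ξ) * deriv e ξ * deriv e ξ + aGL (e ξ) * deriv (deriv e) ξ := (hAe2 ξ).deriv
    rw [h1] at h0
    have hpos := aGL_pos (habs ξ)
    have hne' : aGL (e ξ) ≠ 0 := ne_of_gt hpos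
    have hkey : deriv (deriv e) ξ = V ξ (deriv e ξ) := by
      rw [hV]
      rw [eq_div_iff hne']
      ring_nf
      ring_nf at h0
      linarith [h0]
    rw [← hkey]
    exact (hde' ξ).hasDerivAt
  have hV0 : ∀ t, V t 0 = 0 := by intro t; simp [hV]
  -- uniqueness: a zero of deriv e propagates
  have hzero : ∀ ξ₀, deriv e ξ₀ = 0 → ∀ ξ₁, deriv e ξ₁ = 0 := by
    intro ξ₀ h0 ξ₁
    set a := min ξ₀ ξ₁ - 1 with ha
    set b := max ξ₀ ξ₁ + 1 with hb
    have hab : a < b := by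
      have := min_le_max (a := ξ₀) (b := ξ₁); simp only [ha, hb]; linarith
    have hmem0 : ξ₀ ∈ Set.Ioo a b := by
      constructor
      · simp only [ha]; have := min_le_left ξ₀ ξ₁; linarith
      · simp only [hb]; have := le_max_left ξ₀ ξ₁; linarith
    have hmem1 : ξ₁ ∈ Set.Icc a b := by
      constructor
      · simp only [ha]; have := min_le_right ξ₀ ξ₁; linarith
      · simp only [hb]; have := le_max_right ξ₀ ξ₁; linarith
    obtain ⟨R, hR⟩ := (isCompact_Icc (a := a) (b := b)).exists_bound_of_continuousOn
      hcontd.continuousOn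
    have hR0 : 0 ≤ R := le_trans (norm_nonneg _) (hR ξ₀ (Set.mem_Icc_of_Ioo hmem0))
    have hcont_ad : Continuous fun t => adGL (e t) := by
      rw [continuous_iff_continuousAt]
      exact fun t => (adGL_continuousAt (habs1 t)).comp (hde t).continuousAt
    obtain ⟨C₁, hC₁⟩ := (isCompact_Icc (a := a) (b := b)).exists_bound_of_continuousOn
      hcont_ad.continuousOn
    have hC₁0 : 0 ≤ C₁ := le_trans (norm_nonneg _) (hC₁ a ⟨le_rfl, hab.le⟩)
    have hcont_a : Continuous fun t => aGL (e t) := by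
      rw [continuous_iff_continuousAt]
      intro t
      have h := one_sub_sq_pos (habs1 t)
      exact ContinuousAt.div (by fun_prop) (by fun_prop) (by positivity)
    obtain ⟨x₀, hx₀, hmin'⟩ := (isCompact_Icc (a := a) (b := b)).exists_isMinOn
      (Set.nonempty_Icc.2 hab.le) hcont_a.continuousOn
    have hmin : ∀ t ∈ Set.Icc a b, aGL (e x₀) ≤ aGL (e t) := fun t ht => hmin' ht
    set c₀ := aGL (e x₀) with hc₀
    have hc₀pos : 0 < c₀ := aGL_pos (habs x₀)
    set Bm := max |a| |b| with hBm
    have hBm0 : 0 ≤ Bm := le_trans (abs_nonneg a) (le_max_left _ _)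
    set L := (2 * C₁ * R + Bm / 2) / c₀ with hL
    have hL0 : 0 ≤ L := by positivity
    set K := L.toNNReal with hK
    set Sb : ℝ → Set ℝ := fun t => if t ∈ Set.Icc a b then Metric.closedBall (0:ℝ) R else ∅
      with hSb
    have hv : ∀ t, LipschitzOnWith K (V t) (Sb t) := by
      intro t
      by_cases h : t ∈ Set.Icc a b
      · simp only [hSb, if_pos h]
        rw [lipschitzOnWith_iff_dist_le_mul]
        intro y hy z hz
        rw [Real.dist_eq, Real.dist_eq]
        have hy' : |y| ≤ R := by
          simpa [Real.dist_eq] using Metric.mem_closedBall.mp hy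
        have hz' : |z| ≤ R := by
          simpa [Real.dist_eq] using Metric.mem_closedBall.mp hz
        have hcpos : 0 < aGL (e t) := aGL_pos (habs t)
        have hc0le : c₀ ≤ aGL (e t) := hmin t h
        have hkey : V t y - V t z = -((adGL (e t) * (y + z) + t / 2) * (y - z)) / aGL (e t) := by
          simp only [hV]
          field_simp
          ring
        rw [hkey, abs_div, abs_neg, abs_of_pos hcpos]
        have htb : |t| ≤ Bm := by
          rcases h with ⟨h1, h2⟩
          rw [abs_le]
          constructor
          · calc -Bm ≤ -|a| := neg_le_neg (le_max_left _ _)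
              _ ≤ a := neg_abs_le a
              _ ≤ t := h1
          · calc t ≤ b := h2
              _ ≤ |b| := le_abs_self b
              _ ≤ Bm := le_max_right _ _
        have hnum : |(adGL (e t) * (y + z) + t / 2) * (y - z)|
            ≤ (2 * C₁ * R + Bm / 2) * |y - z| := by
          rw [abs_mul]
          apply mul_le_mul_of_nonneg_right _ (abs_nonneg _)
          calc |adGL (e t) * (y + z) + t / 2| ≤ |adGL (e t) * (y + z)| + |t / 2| :=
                abs_add_le _ _
            _ = |adGL (e t)| * |y + z| + |t| / 2 := by rw [abs_mul, abs_div]; norm_num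
            _ ≤ C₁ * (2 * R) + Bm / 2 := by
                have h1 : |adGL (e t)| ≤ C₁ := by
                  simpa [Real.norm_eq_abs] using hC₁ t h
                have h2 : |y + z| ≤ 2 * R := by
                  calc |y + z| ≤ |y| + |z| := abs_add_le _ _
                    _ ≤ 2 * R := by linarith
                have := mul_le_mul h1 h2 (abs_nonneg _) hC₁0
                linarith
            _ = 2 * C₁ * R + Bm / 2 := by ring
        have hcoe : (K : ℝ) = L := Real.coe_toNNReal L hL0
        rw [hcoe]
        calc |(adGL (e t) * (y + z) + t / 2) * (y - z)| / aGL (e t)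
            ≤ ((2 * C₁ * R + Bm / 2) * |y - z|) / c₀ :=
              div_le_div₀ (by positivity) hnum hc₀pos hc0le
          _ = L * |y - z| := by rw [hL]; ring
      · simp only [hSb, if_neg h]
        exact lipschitzOnWith_empty K (V t)
    have huniq := ODE_solution_unique_of_mem_Icc (fun t _ => hv t) hmem0
      hcontd.continuousOn
      (fun t _ => hODE t)
      (fun t ht => by
        simp only [hSb, if_pos (Set.mem_Icc_of_Ioo ht), Metric.mem_closedBall, Real.dist_eq,
          sub_zero]
        simpa [Real.norm_eq_abs] using hR t (Set.mem_Icc_of_Ioo ht))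
      continuousOn_const
      (fun t _ => by simpa [hV0 t] using (hasDerivAt_const t (0:ℝ)))
      (fun t ht => by
        simp only [hSb, if_pos (Set.mem_Icc_of_Ioo ht), Metric.mem_closedBall, Real.dist_eq,
          sub_zero, abs_zero]
        exact hR0)
      h0
    exact huniq hmem1
  -- no zero of deriv e
  by_cases hz : ∃ ξ₀, deriv e ξ₀ = 0
  · exfalso
    obtain ⟨ξ₀, hξ₀⟩ := hz
    have hc : ∀ x, e x = e 0 := fun x => is_const_of_deriv_eq_zero hde (hzero ξ₀ hξ₀) x 0
    have h1 : ηp = e 0 := tendsto_nhds_unique (htop.congr hc) tendsto_const_nhds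
    have h2 : ηm = e 0 := tendsto_nhds_unique (hbot.congr hc) tendsto_const_nhds
    exact hne (h1.trans h2.symm)
  · push_neg at hz
    intro ξ
    rcases lt_or_gt_of_ne (hz 0) with hneg | hpos
    · -- deriv e < 0 everywhere
      have hall : ∀ x, deriv e x < 0 := by
        intro x
        by_contra h
        push_neg at h
        have hx : 0 < deriv e x := lt_of_le_of_ne h (Ne.symm (hz x))
        have : (0:ℝ) ∈ Set.uIcc (deriv e 0) (deriv e x) :=
          Set.mem_uIcc.2 (Or.inl ⟨hneg.le, hx.le⟩)
        obtain ⟨c, _, hc⟩ := intermediate_value_uIcc hcontd.continuousOn this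
        exact hz c hc
      have hanti : Antitone e := (strictAnti_of_deriv_neg hall).antitone
      have h1 : e ξ ≤ ηm := hanti.ge_of_tendsto hbot ξ
      have h2 : ηp ≤ e ξ := hanti.le_of_tendsto htop ξ
      rw [abs_le]
      constructor
      · calc -(max |ηp| |ηm|) ≤ -|ηp| := neg_le_neg (le_max_left _ _)
          _ ≤ ηp := neg_abs_le ηp
          _ ≤ e ξ := h2
      · calc e ξ ≤ ηm := h1
          _ ≤ |ηm| := le_abs_self ηm
          _ ≤ max |ηp| |ηm| := le_max_right _ _
    · have hall : ∀ x, 0 < deriv e x := by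
        intro x
        by_contra h
        push_neg at h
        have hx : deriv e x < 0 := lt_of_le_of_ne h (hz x)
        have : (0:ℝ) ∈ Set.uIcc (deriv e 0) (deriv e x) :=
          Set.mem_uIcc.2 (Or.inr ⟨hx.le, hpos.le⟩)
        obtain ⟨c, _, hc⟩ := intermediate_value_uIcc hcontd.continuousOn this
        exact hz c hc
      have hmono : Monotone e := (strictMono_of_deriv_pos hall).monotone
      have h1 : e ξ ≤ ηp := hmono.ge_of_tendsto htop ξ
      have h2 : ηm ≤ e ξ := hmono.le_of_tendsto hbot ξ
      rw [abs_le]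
      constructor
      · calc -(max |ηp| |ηm|) ≤ -|ηm| := neg_le_neg (le_max_right _ _)
          _ ≤ ηm := neg_abs_le ηm
          _ ≤ e ξ := h2
      · calc e ξ ≤ ηp := h1
          _ ≤ |ηp| := le_abs_self ηp
          _ ≤ max |ηp| |ηm| := le_max_left _ _


lemma schwartz_hasDerivAt (f : 𝓢(ℝ, ℝ)) (x : ℝ) : HasDerivAt f (deriv f x) x :=
  (f.differentiable x).hasDerivAt

lemma schwartz_deriv_eq (f : 𝓢(ℝ, ℝ)) : deriv (⇑f) = ⇑(SchwartzMap.derivCLM ℝ ℝ f) :=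
  funext fun x => (SchwartzMap.derivCLM_apply (𝕜 := ℝ) f x).symm

lemma schwartz_tendsto_cocompact (f : 𝓢(ℝ, ℝ)) : Tendsto f (cocompact ℝ) (𝓝 0) :=
  zero_at_infty f

lemma schwartz_tendsto_atTop (f : 𝓢(ℝ, ℝ)) : Tendsto f atTop (𝓝 0) :=
  (schwartz_tendsto_cocompact f).mono_left (by rw [cocompact_eq_atBot_atTop]; exact le_sup_right)

lemma schwartz_tendsto_atBot (f : 𝓢(ℝ, ℝ)) : Tendsto f atBot (𝓝 0) :=
  (schwartz_tendsto_cocompact f).mono_left (by rw [cocompact_eq_atBot_atTop]; exact le_sup_left)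

/-- A Schwartz function times a bounded continuous function is integrable. -/
lemma integrable_schwartz_mul (f : 𝓢(ℝ, ℝ)) {g : ℝ → ℝ} (hg : Continuous g) {C : ℝ}
    (hC : ∀ x, |g x| ≤ C) : Integrable (fun x => f x * g x) := by
  apply Integrable.mono' ((f.integrable (μ := volume)).norm.const_mul C)
    ((f.continuous.mul hg).aestronglyMeasurable)
  filter_upwards with x
  rw [Real.norm_eq_abs, Pi.mul_apply, abs_mul]
  have h1 : 0 ≤ |f x| := abs_nonneg _
  have := hC x
  calc |f x| * |g x| ≤ |f x| * C := mul_le_mul_of_nonneg_left (hC x) h1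
    _ = C * ‖f x‖ := by rw [Real.norm_eq_abs]; ring

lemma schwartz_bounded (f : 𝓢(ℝ, ℝ)) (x : ℝ) : |f x| ≤ SchwartzMap.seminorm ℝ 0 0 f := by
  simpa [Real.norm_eq_abs] using SchwartzMap.norm_le_seminorm ℝ f x

lemma schwartz_mul_x_bounded (f : 𝓢(ℝ, ℝ)) (x : ℝ) :
    |x * f x| ≤ SchwartzMap.seminorm ℝ 1 0 f := by
  have := SchwartzMap.norm_pow_mul_le_seminorm ℝ f 1 x
  simpa [Real.norm_eq_abs, abs_mul] using this

/-- Sobolev-type bound: `|f'(x)|² ≤ ∫ (f² + f'² + f''²)`. -/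
lemma sobolev_deriv_sq_le (f : 𝓢(ℝ, ℝ)) (x : ℝ) :
    (deriv f x) ^ 2 ≤ ∫ ξ : ℝ, (f ξ ^ 2 + deriv f ξ ^ 2 + deriv (deriv f) ξ ^ 2) := by
  set g : 𝓢(ℝ, ℝ) := SchwartzMap.derivCLM ℝ ℝ f with hg
  have hgc : ⇑g = deriv (⇑f) := (schwartz_deriv_eq f).symm
  have hg2 : deriv (⇑g) = deriv (deriv (⇑f)) := by rw [hgc]
  -- integrability facts
  have hCg : ∀ y, |(⇑g) y| ≤ SchwartzMap.seminorm ℝ 0 0 g := schwartz_bounded g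
  have hCg' : ∀ y, |deriv (⇑g) y| ≤ SchwartzMap.seminorm ℝ 0 0 (SchwartzMap.derivCLM ℝ ℝ g) := by
    intro y
    rw [schwartz_deriv_eq g]
    exact schwartz_bounded _ y
  have hgg'_int : Integrable (fun y => g y * deriv (⇑g) y) :=
    integrable_schwartz_mul g (by rw [schwartz_deriv_eq g]; exact (SchwartzMap.derivCLM ℝ ℝ g).continuous) hCg'
  have hg2_int : Integrable (fun y => g y * g y) :=
    integrable_schwartz_mul g g.continuous hCg
  have hg'2_int : Integrable (fun y => deriv (⇑g) y * deriv (⇑g) y) := by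
    have := integrable_schwartz_mul (SchwartzMap.derivCLM ℝ ℝ g)
      (SchwartzMap.derivCLM ℝ ℝ g).continuous (schwartz_bounded (SchwartzMap.derivCLM ℝ ℝ g))
    apply this.congr
    filter_upwards with y
    rw [← schwartz_deriv_eq g]
  -- FTC on (-∞, x]
  have hder : ∀ y ∈ Set.Iio x, HasDerivAt (fun t => (g t) ^ 2) (2 * (g y * deriv (⇑g) y)) y := by
    intro y _
    have h1 := (schwartz_hasDerivAt g y).mul (schwartz_hasDerivAt g y)
    have h2 : (⇑g * ⇑g) = fun t => (g t) ^ 2 := funext fun t => (sq (g t)).symm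
    rw [h2] at h1
    exact h1.congr_deriv (by ring)
  have htend : Tendsto (fun t => (g t) ^ 2) atBot (𝓝 0) := by
    have := (schwartz_tendsto_atBot g).mul (schwartz_tendsto_atBot g)
    simp only [mul_zero] at this
    apply this.congr
    intro t; exact (sq (g t)).symm
  have hint : IntegrableOn (fun y => 2 * (g y * deriv (⇑g) y)) (Set.Iic x) :=
    ((hgg'_int.const_mul 2).integrableOn)
  have hFTC := MeasureTheory.integral_Iic_of_hasDerivAt_of_tendsto
    ((g.continuous.pow 2).continuousWithinAt) hder hint htend
  rw [sub_zero, Pi.pow_apply] at hFTC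
  -- now the chain of inequalities
  have step1 : (g x) ^ 2 ≤ ∫ y in Set.Iic x, (g y ^ 2 + deriv (⇑g) y ^ 2) := by
    rw [← hFTC]
    apply MeasureTheory.setIntegral_mono_on (hint.mono_set (fun _ h => h))
      ((hg2_int.add hg'2_int).integrableOn.congr_fun ?_ measurableSet_Iic) measurableSet_Iic
    · intro y _
      nlinarith [sq_nonneg (g y - deriv (⇑g) y)]
    · intro y _
      simp [sq]
  have step2 : ∫ y in Set.Iic x, (g y ^ 2 + deriv (⇑g) y ^ 2)
      ≤ ∫ y : ℝ, (g y ^ 2 + deriv (⇑g) y ^ 2) := by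
    apply MeasureTheory.setIntegral_le_integral
    · apply ((hg2_int.add hg'2_int).congr ?_)
      filter_upwards with y
      simp [sq]
    · filter_upwards with y
      positivity
  have step3 : ∫ y : ℝ, (g y ^ 2 + deriv (⇑g) y ^ 2)
      ≤ ∫ ξ : ℝ, (f ξ ^ 2 + deriv (⇑f) ξ ^ 2 + deriv (deriv (⇑f)) ξ ^ 2) := by
    have hf2_int : Integrable (fun y => f y * f y) :=
      integrable_schwartz_mul f f.continuous (schwartz_bounded f)
    apply MeasureTheory.integral_mono
    · apply ((hg2_int.add hg'2_int).congr ?_)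
      filter_upwards with y
      simp [sq]
    · have : Integrable (fun y => f y ^ 2 + (g y ^ 2 + deriv (⇑g) y ^ 2)) := by
        apply (hf2_int.add (hg2_int.add hg'2_int)).congr
        filter_upwards with y
        simp [sq]
      apply this.congr
      filter_upwards with y
      simp only [hgc, hg2]
      ring
    · intro y
      have e1 : g y = deriv (⇑f) y := congrFun hgc y
      have e2 : deriv (⇑g) y = deriv (deriv (⇑f)) y := congrFun hg2 y
      dsimp only
      rw [e1, e2]
      nlinarith [sq_nonneg (f y)]
  have hgx : deriv (⇑f) x = g x := by rw [hgc]
  rw [hgx]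
  linarith

lemma sobolev_deriv_abs_le (f : 𝓢(ℝ, ℝ)) (x : ℝ) : |deriv f x| ≤ H2norm f := by
  rw [H2norm, ← Real.sqrt_sq_eq_abs]
  exact Real.sqrt_le_sqrt (sobolev_deriv_sq_le f x)


lemma continuous_schwartz_eval (ξ : ℝ) : Continuous fun f : 𝓢(ℝ, ℝ) => f ξ := by
  have h1 := (SchwartzMap.toBoundedContinuousFunctionCLM (𝕜 := ℝ) (E := ℝ) (F := ℝ)).continuous
  have h2 : Continuous fun b : BoundedContinuousFunction ℝ ℝ => b ξ := continuous_eval_const ξ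
  have h3 := h2.comp h1
  exact h3

lemma schwartz_eval_continuousOn {s : Set ℝ} {Φ : ℝ → 𝓢(ℝ, ℝ)} (hΦ : ContinuousOn Φ s)
    (ξ : ℝ) : ContinuousOn (fun τ => Φ τ ξ) s :=
  (continuous_schwartz_eval ξ).comp_continuousOn hΦ

lemma schwartz_decay_bound (f : 𝓢(ℝ, ℝ)) (x : ℝ) :
    |f x| ≤ (SchwartzMap.seminorm ℝ 0 0 f + SchwartzMap.seminorm ℝ 2 0 f) / (1 + x ^ 2) := by
  have h0 := schwartz_bounded f x
  have h2 := SchwartzMap.norm_pow_mul_le_seminorm ℝ f 2 x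
  rw [Real.norm_eq_abs, Real.norm_eq_abs] at h2
  rw [le_div_iff₀ (by positivity : (0:ℝ) < 1 + x ^ 2)]
  have hx2 : |x| ^ 2 = x ^ 2 := sq_abs x
  nlinarith [abs_nonneg (f x)]

lemma exists_uniform_decay {τ₁ τ₂ : ℝ} {Φ : ℝ → 𝓢(ℝ, ℝ)}
    (hΦ : ContinuousOn Φ (Set.Icc τ₁ τ₂)) :
    ∃ C : ℝ, 0 ≤ C ∧ ∀ τ ∈ Set.Icc τ₁ τ₂, ∀ ξ : ℝ, |Φ τ ξ| ≤ C / (1 + ξ ^ 2) := by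
  have hsem : ∀ k n : ℕ, ContinuousOn (fun τ => SchwartzMap.seminorm ℝ k n (Φ τ))
      (Set.Icc τ₁ τ₂) := by
    intro k n
    have h := (schwartz_withSeminorms ℝ ℝ ℝ).continuous_seminorm (k, n)
    exact h.comp_continuousOn hΦ
  obtain ⟨C0, hC0⟩ := isCompact_Icc.exists_bound_of_continuousOn (hsem 0 0)
  obtain ⟨C2, hC2⟩ := isCompact_Icc.exists_bound_of_continuousOn (hsem 2 0)
  refine ⟨max C0 0 + max C2 0, by positivity, fun τ hτ ξ => ?_⟩
  have hd := schwartz_decay_bound (Φ τ) ξ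
  have h0 : SchwartzMap.seminorm ℝ 0 0 (Φ τ) ≤ max C0 0 := by
    have := hC0 τ hτ
    rw [Real.norm_eq_abs] at this
    exact le_trans (le_abs_self _) (le_trans this (le_max_left _ _))
  have h2 : SchwartzMap.seminorm ℝ 2 0 (Φ τ) ≤ max C2 0 := by
    have := hC2 τ hτ
    rw [Real.norm_eq_abs] at this
    exact le_trans (le_abs_self _) (le_trans this (le_max_left _ _))
  refine le_trans hd ?_
  apply div_le_div_of_nonneg_right _ (by positivity)
  · linarith

lemma stepA {τ₁ τ₂ : ℝ} (h12 : τ₁ ≤ τ₂) {Φ dΦ : ℝ → 𝓢(ℝ, ℝ)}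
    (hΦ : ContinuousOn Φ (Set.Icc τ₁ τ₂)) (hdΦ : ContinuousOn dΦ (Set.Icc τ₁ τ₂))
    (hd : ∀ τ ∈ Set.Icc τ₁ τ₂, ∀ ξ : ℝ,
      HasDerivWithinAt (fun t => Φ t ξ) (dΦ τ ξ) (Set.Icc τ₁ τ₂) τ) :
    ContinuousOn (fun τ => ∫ ξ : ℝ, Φ τ ξ * dΦ τ ξ) (Set.Icc τ₁ τ₂) ∧
    ∀ τ ∈ Set.Icc τ₁ τ₂, HasDerivWithinAt (fun t => (1/2 : ℝ) * ∫ ξ : ℝ, (Φ t ξ) ^ 2)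
      (∫ ξ : ℝ, Φ τ ξ * dΦ τ ξ) (Set.Icc τ₁ τ₂) τ := by
  obtain ⟨C, hC0, hCb⟩ := exists_uniform_decay hΦ
  obtain ⟨D, hD0, hDb⟩ := exists_uniform_decay hdΦ
  set E0' : ℝ → ℝ := fun τ => ∫ ξ : ℝ, Φ τ ξ * dΦ τ ξ with hE0'
  have hDb' : ∀ τ ∈ Set.Icc τ₁ τ₂, ∀ ξ : ℝ, |dΦ τ ξ| ≤ D := by
    intro τ hτ ξ
    refine le_trans (hDb τ hτ ξ) ?_
    rw [div_le_iff₀ (by positivity)]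
    nlinarith [sq_nonneg ξ]
  -- uniform product bound
  have hprod : ∀ τ ∈ Set.Icc τ₁ τ₂, ∀ ξ : ℝ, ‖Φ τ ξ * dΦ τ ξ‖ ≤ C * D * (1 + ξ ^ 2)⁻¹ := by
    intro τ hτ ξ
    rw [Real.norm_eq_abs, abs_mul]
    calc |Φ τ ξ| * |dΦ τ ξ| ≤ (C / (1 + ξ ^ 2)) * D :=
          mul_le_mul (hCb τ hτ ξ) (hDb' τ hτ ξ) (abs_nonneg _) (by positivity)
      _ = C * D * (1 + ξ ^ 2)⁻¹ := by ring
  have hbound_int : Integrable (fun ξ : ℝ => C * D * (1 + ξ ^ 2)⁻¹) :=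
    integrable_inv_one_add_sq.const_mul (C * D)
  -- continuity of E0'
  have hcontE : ContinuousOn E0' (Set.Icc τ₁ τ₂) := by
    apply MeasureTheory.continuousOn_of_dominated
      (bound := fun ξ : ℝ => C * D * (1 + ξ ^ 2)⁻¹)
    · intro τ hτ
      exact ((Φ τ).continuous.mul (dΦ τ).continuous).aestronglyMeasurable
    · intro τ hτ
      filter_upwards with ξ
      exact hprod τ hτ ξ
    · exact hbound_int
    · filter_upwards with ξ
      exact (schwartz_eval_continuousOn hΦ ξ).mul (schwartz_eval_continuousOn hdΦ ξ)
  refine ⟨hcontE, ?_⟩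
  -- squares are integrable
  have hsq_int : ∀ σ, Integrable (fun ξ : ℝ => (Φ σ ξ) ^ 2) := by
    intro σ
    apply (integrable_schwartz_mul (Φ σ) (Φ σ).continuous (schwartz_bounded (Φ σ))).congr
    filter_upwards with ξ
    exact (sq (Φ σ ξ)).symm
  -- key identity via FTC + Fubini
  have hkey : ∀ σ ∈ Set.Icc τ₁ τ₂,
      (1/2 : ℝ) * ∫ ξ : ℝ, (Φ σ ξ) ^ 2
        = (1/2 : ℝ) * (∫ ξ : ℝ, (Φ τ₁ ξ) ^ 2) + ∫ t in τ₁..σ, E0' t := by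
    intro σ hσ
    obtain ⟨hσ1, hσ2⟩ := hσ
    have hIccσ : Set.Icc τ₁ σ ⊆ Set.Icc τ₁ τ₂ := Set.Icc_subset_Icc le_rfl hσ2
    -- FTC for each ξ
    have hFTC : ∀ ξ : ℝ, ∫ t in τ₁..σ, Φ t ξ * dΦ t ξ
        = (1/2 : ℝ) * (Φ σ ξ) ^ 2 - (1/2 : ℝ) * (Φ τ₁ ξ) ^ 2 := by
      intro ξ
      have hcont : ContinuousOn (fun t => (1/2 : ℝ) * (Φ t ξ) ^ 2) (Set.Icc τ₁ σ) :=
        (((schwartz_eval_continuousOn hΦ ξ).mono hIccσ).pow 2).const_smul (1/2 : ℝ)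
      have hderiv : ∀ t ∈ Set.Ioo τ₁ σ,
          HasDerivWithinAt (fun t => (1/2 : ℝ) * (Φ t ξ) ^ 2) (Φ t ξ * dΦ t ξ)
            (Set.Ioi t) t := by
        intro t ht
        have htI : t ∈ Set.Icc τ₁ τ₂ := ⟨ht.1.le, le_trans ht.2.le hσ2⟩
        have h1 := hd t htI ξ
        have h2 := (h1.mul h1).const_mul (1/2 : ℝ)
        have h3 : HasDerivWithinAt (fun t => (1/2 : ℝ) * (Φ t ξ) ^ 2) (Φ t ξ * dΦ t ξ)
            (Set.Icc τ₁ τ₂) t := by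
          have hfun : (fun t => (1/2 : ℝ) * (Φ t ξ * Φ t ξ)) =
              fun t => (1/2 : ℝ) * (Φ t ξ) ^ 2 := by
            funext u; ring
          rw [← hfun]
          exact h2.congr_deriv (by ring)
        apply h3.mono_of_mem_nhdsWithin
        apply Filter.mem_of_superset
          (Ioc_mem_nhdsGT_of_mem (⟨le_rfl, lt_of_lt_of_le ht.2 hσ2⟩ : t ∈ Set.Ico t τ₂))
        exact fun u hu => ⟨le_trans htI.1 hu.1.le, hu.2⟩
      have hint : IntervalIntegrable (fun t => Φ t ξ * dΦ t ξ) volume τ₁ σ := by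
        apply ContinuousOn.intervalIntegrable
        rw [Set.uIcc_of_le hσ1]
        exact ((schwartz_eval_continuousOn hΦ ξ).mono hIccσ).mul
          ((schwartz_eval_continuousOn hdΦ ξ).mono hIccσ)
      have := intervalIntegral.integral_eq_sub_of_hasDeriv_right_of_le hσ1 hcont hderiv hint
      rw [this]
    -- Fubini
    have hjoint : ContinuousOn (fun p : ℝ × ℝ => Φ p.2 p.1 * dΦ p.2 p.1)
        (Set.univ ×ˢ Set.Icc τ₁ τ₂) := by
      have hev : Continuous fun q : 𝓢(ℝ, ℝ) × ℝ => q.1 q.2 := by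
        have h2 : Continuous fun q : BoundedContinuousFunction ℝ ℝ × ℝ => q.1 q.2 :=
          continuous_eval
        have h1 : Continuous fun q : 𝓢(ℝ, ℝ) × ℝ =>
            ((SchwartzMap.toBoundedContinuousFunctionCLM (𝕜 := ℝ) (E := ℝ) (F := ℝ)) q.1, q.2) :=
          ((SchwartzMap.toBoundedContinuousFunctionCLM (𝕜 := ℝ) (E := ℝ)
            (F := ℝ)).continuous.comp continuous_fst).prodMk continuous_snd
        exact h2.comp h1
      have hΦp : ContinuousOn (fun p : ℝ × ℝ => Φ p.2 p.1) (Set.univ ×ˢ Set.Icc τ₁ τ₂) := by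
        have hin : ContinuousOn (fun p : ℝ × ℝ => ((Φ p.2 : 𝓢(ℝ, ℝ)), p.1))
            (Set.univ ×ˢ Set.Icc τ₁ τ₂) :=
          (hΦ.comp continuous_snd.continuousOn (fun p (hp : p ∈ Set.univ ×ˢ Set.Icc τ₁ τ₂) => hp.2)).prodMk
            continuous_fst.continuousOn
        exact hev.comp_continuousOn hin
      have hdΦp : ContinuousOn (fun p : ℝ × ℝ => dΦ p.2 p.1) (Set.univ ×ˢ Set.Icc τ₁ τ₂) := by
        have hin : ContinuousOn (fun p : ℝ × ℝ => ((dΦ p.2 : 𝓢(ℝ, ℝ)), p.1))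
            (Set.univ ×ˢ Set.Icc τ₁ τ₂) :=
          (hdΦ.comp continuous_snd.continuousOn (fun p (hp : p ∈ Set.univ ×ˢ Set.Icc τ₁ τ₂) => hp.2)).prodMk
            continuous_fst.continuousOn
        exact hev.comp_continuousOn hin
      exact hΦp.mul hdΦp
    have hmeasprod : AEStronglyMeasurable (fun p : ℝ × ℝ => Φ p.2 p.1 * dΦ p.2 p.1)
        (volume.prod (volume.restrict (Set.Ioc τ₁ σ))) := by
      have hrw : volume.prod (volume.restrict (Set.Ioc τ₁ σ))
          = ((volume : Measure ℝ).prod volume).restrict (Set.univ ×ˢ Set.Ioc τ₁ σ) := by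
        rw [← Measure.prod_restrict, Measure.restrict_univ]
      rw [hrw]
      apply ContinuousOn.aestronglyMeasurable
      · exact hjoint.mono (Set.prod_mono le_rfl (fun t ht => ⟨ht.1.le, le_trans ht.2 hσ2⟩))
      · exact MeasurableSet.univ.prod measurableSet_Ioc
    have hintprod : Integrable (Function.uncurry (fun ξ t => Φ t ξ * dΦ t ξ))
        (volume.prod (volume.restrict (Set.Ioc τ₁ σ))) := by
      have huncurry : Function.uncurry (fun ξ t => Φ t ξ * dΦ t ξ)
          = fun p : ℝ × ℝ => Φ p.2 p.1 * dΦ p.2 p.1 := rfl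
      rw [huncurry, integrable_prod_iff hmeasprod]
      constructor
      · filter_upwards with ξ
        apply Integrable.mono' (g := fun _ : ℝ => C * D * (1 + ξ ^ 2)⁻¹)
        · exact integrable_const _
        · apply ContinuousOn.aestronglyMeasurable
          · exact (((schwartz_eval_continuousOn hΦ ξ).mul
              (schwartz_eval_continuousOn hdΦ ξ)).mono
              (fun t ht => ⟨ht.1.le, le_trans ht.2 hσ2⟩))
          · exact measurableSet_Ioc
        · filter_upwards [MeasureTheory.ae_restrict_mem measurableSet_Ioc] with t ht
          exact hprod t ⟨ht.1.le, le_trans ht.2 hσ2⟩ ξ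
      · apply Integrable.mono'
          (g := fun ξ : ℝ => (volume (Set.Ioc τ₁ σ)).toReal * (C * D * (1 + ξ ^ 2)⁻¹))
        · exact hbound_int.const_mul _
        · exact hmeasprod.norm.integral_prod_right'
        · filter_upwards with ξ
          rw [Real.norm_eq_abs]
          have h1 : |∫ t in Set.Ioc τ₁ σ, ‖Φ t ξ * dΦ t ξ‖|
              = ∫ t in Set.Ioc τ₁ σ, ‖Φ t ξ * dΦ t ξ‖ := by
            apply abs_of_nonneg
            apply MeasureTheory.integral_nonneg
            intro t; exact norm_nonneg _
          rw [h1]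
          calc ∫ t in Set.Ioc τ₁ σ, ‖Φ t ξ * dΦ t ξ‖
              ≤ ∫ _ in Set.Ioc τ₁ σ, C * D * (1 + ξ ^ 2)⁻¹ := by
                apply MeasureTheory.integral_mono_of_nonneg
                · filter_upwards with t; exact norm_nonneg _
                · exact integrable_const _
                · filter_upwards [MeasureTheory.ae_restrict_mem measurableSet_Ioc] with t ht
                  exact hprod t ⟨ht.1.le, le_trans ht.2 hσ2⟩ ξ
            _ = (volume (Set.Ioc τ₁ σ)).toReal * (C * D * (1 + ξ ^ 2)⁻¹) := by
                rw [MeasureTheory.integral_const, smul_eq_mul]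
                simp [Measure.real]
    have hswap := MeasureTheory.integral_integral_swap hintprod
    -- assemble
    have lhs_eq : ∫ ξ : ℝ, ∫ t in Set.Ioc τ₁ σ, Φ t ξ * dΦ t ξ
        = ∫ ξ : ℝ, ((1/2 : ℝ) * (Φ σ ξ) ^ 2 - (1/2 : ℝ) * (Φ τ₁ ξ) ^ 2) := by
      apply MeasureTheory.integral_congr_ae
      filter_upwards with ξ
      rw [← intervalIntegral.integral_of_le hσ1]
      exact hFTC ξ
    have rhs_eq : ∫ t in Set.Ioc τ₁ σ, (∫ ξ : ℝ, Φ t ξ * dΦ t ξ) = ∫ t in τ₁..σ, E0' t := by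
      rw [intervalIntegral.integral_of_le hσ1]
    rw [lhs_eq, rhs_eq] at hswap
    have hsplit : ∫ ξ : ℝ, ((1/2 : ℝ) * (Φ σ ξ) ^ 2 - (1/2 : ℝ) * (Φ τ₁ ξ) ^ 2)
        = (1/2 : ℝ) * (∫ ξ : ℝ, (Φ σ ξ) ^ 2) - (1/2 : ℝ) * (∫ ξ : ℝ, (Φ τ₁ ξ) ^ 2) := by
      rw [MeasureTheory.integral_sub ((hsq_int σ).const_mul _) ((hsq_int τ₁).const_mul _),
        MeasureTheory.integral_const_mul, MeasureTheory.integral_const_mul]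
    rw [hsplit] at hswap
    linarith [hswap]
  -- conclude
  intro τ hτ
  haveI : Fact (τ ∈ Set.Icc τ₁ τ₂) := ⟨hτ⟩
  have hW : HasDerivWithinAt (fun σ => ∫ t in τ₁..σ, E0' t) (E0' τ) (Set.Icc τ₁ τ₂) τ := by
    apply intervalIntegral.integral_hasDerivWithinAt_right
      (s := Set.Icc τ₁ τ₂) (t := Set.Icc τ₁ τ₂)
    · apply ContinuousOn.intervalIntegrable
      exact hcontE.mono (Set.uIcc_subset_Icc ⟨le_rfl, h12⟩ hτ)
    · exact ⟨Set.Icc τ₁ τ₂, self_mem_nhdsWithin,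
        hcontE.aestronglyMeasurable measurableSet_Icc⟩
    · exact hcontE τ hτ
  have hW2 := hW.const_add ((1/2 : ℝ) * ∫ ξ : ℝ, (Φ τ₁ ξ) ^ 2)
  apply hW2.congr
  · intro σ hσ
    exact hkey σ hσ
  · exact hkey τ hτ


/-- Lipschitz-type bound for `AGL` on `[-ηb, ηb]` with `ηb < 1/√3`. -/
lemma AGL_diff_le {ηb x y : ℝ} (hb3 : ηb < 1 / Real.sqrt 3) (hb0 : 0 ≤ ηb)
    (hx : |x| ≤ ηb) (hy : |y| ≤ ηb) : |AGL y - AGL x| ≤ |y - x| := by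
  have h13 : (1 / Real.sqrt 3 : ℝ) < 1 := by
    have h3 : Real.sqrt 3 ^ 2 = 3 := Real.sq_sqrt (by norm_num)
    have h3p : 0 < Real.sqrt 3 := Real.sqrt_pos.2 (by norm_num)
    rw [div_lt_one h3p]
    nlinarith
  have hx1 : |x| < 1 := lt_of_le_of_lt hx (lt_trans hb3 h13)
  have hy1 : |y| < 1 := lt_of_le_of_lt hy (lt_trans hb3 h13)
  have key : AGL y - AGL x = ∫ s in x..y, aGL s := by
    have := intervalIntegral.integral_add_adjacent_intervals
      (aGL_intervalIntegrable (x := 0) (by norm_num) hx1) (aGL_intervalIntegrable hx1 hy1)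
    rw [AGL, AGL]; linarith [this]
  rw [key]
  have := intervalIntegral.norm_integral_le_of_norm_le_const
    (C := 1) (f := aGL) (a := x) (b := y) ?_
  · simpa [Real.norm_eq_abs] using this
  · intro s hs
    have hs' : |s| ≤ ηb := by
      rcases hs with ⟨h1, h2⟩
      rw [abs_le]
      constructor
      · calc -ηb ≤ min x y := le_min (neg_le_of_abs_le hx) (neg_le_of_abs_le hy)
          _ ≤ s := h1.le
      · calc s ≤ max x y := h2
          _ ≤ ηb := max_le (le_of_abs_le hx) (le_of_abs_le hy)
    have hpos : 0 < aGL s := aGL_pos (lt_of_le_of_lt hs' hb3)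
    have hle : aGL s ≤ 1 := aGL_le_one (lt_of_le_of_lt hs' (lt_trans hb3 h13))
    rw [Real.norm_eq_abs, abs_of_pos hpos]
    exact hle

set_option maxHeartbeats 2000000 in
/-- Step B: the core energy estimate at a fixed time. -/
lemma stepB {e : ℝ → ℝ} (hC2 : ContDiff ℝ 2 e)
    {η₀ ηb ε ab ν : ℝ} (hη₀ : 0 ≤ η₀) (hηb0 : 0 < ηb) (hb3 : ηb < 1 / Real.sqrt 3)
    (hεb : η₀ + ε = ηb) (hab : ab = aGL ηb) (hν : 0 < ν)
    (heb : ∀ ξ, |e ξ| ≤ η₀)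
    (ψ s dψ : 𝓢(ℝ, ℝ))
    (hψ' : ∀ ξ, |deriv ψ ξ| ≤ ε)
    (heq : ∀ ξ : ℝ, dψ ξ =
      deriv (fun x => AGL (e x + deriv ψ x) - AGL (e x)) ξ
      + ξ / 2 * deriv ψ ξ - (1 / 2) * ψ ξ + (e ξ + deriv ψ ξ) * deriv s ξ) :
    ∫ ξ : ℝ, ψ ξ * dψ ξ ≤ -(3/2 - ν) * ((1/2) * ∫ ξ : ℝ, (ψ ξ) ^ 2)
      - ab * (∫ ξ : ℝ, (deriv ψ ξ) ^ 2) + (ηb ^ 2 / ν) * ∫ ξ : ℝ, (deriv s ξ) ^ 2 := by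
  have h13 : (1 / Real.sqrt 3 : ℝ) < 1 := by
    have h3 : Real.sqrt 3 ^ 2 = 3 := Real.sq_sqrt (by norm_num)
    have h3p : 0 < Real.sqrt 3 := Real.sqrt_pos.2 (by norm_num)
    rw [div_lt_one h3p]
    nlinarith
  have hηb1 : |ηb| < 1 := by rw [abs_of_pos hηb0]; exact lt_trans hb3 h13
  set G : ℝ → ℝ := fun x => AGL (e x + deriv ψ x) - AGL (e x) with hG
  set ψd : 𝓢(ℝ, ℝ) := SchwartzMap.derivCLM ℝ ℝ ψ with hψd
  set sd : 𝓢(ℝ, ℝ) := SchwartzMap.derivCLM ℝ ℝ s with hsd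
  have hψ'eq : deriv (⇑ψ) = ⇑ψd := schwartz_deriv_eq ψ
  have hs'eq : deriv (⇑s) = ⇑sd := schwartz_deriv_eq s
  have hψ'c : Continuous (deriv (⇑ψ)) := by rw [hψ'eq]; exact ψd.continuous
  have hs'c : Continuous (deriv (⇑s)) := by rw [hs'eq]; exact sd.continuous
  have hec : Continuous e := (hC2.differentiable (by norm_num)).continuous
  have hη : ∀ x, |e x + deriv ψ x| ≤ ηb := by
    intro x
    calc |e x + deriv ψ x| ≤ |e x| + |deriv ψ x| := abs_add_le _ _
      _ ≤ η₀ + ε := add_le_add (heb x) (hψ' x)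
      _ = ηb := hεb
  have hη1 : ∀ x, |e x + deriv ψ x| < 1 := fun x => lt_of_le_of_lt (hη x) (lt_of_abs_lt hηb1)
  have hε0 : 0 ≤ ε := le_trans (abs_nonneg _) (hψ' 0)
  have hη₀b : η₀ ≤ ηb := by linarith
  have he1 : ∀ x, |e x| < 1 := fun x =>
    lt_of_le_of_lt (le_trans (heb x) hη₀b) (lt_of_abs_lt hηb1)
  -- derivative of G
  have hηd : ∀ x, HasDerivAt (fun y => e y + deriv ψ y) (deriv e x + deriv (⇑ψd) x) x := by
    intro x
    apply HasDerivAt.add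
    · exact ((hC2.differentiable (by norm_num)) x).hasDerivAt
    · rw [hψ'eq]; exact schwartz_hasDerivAt ψd x
  have hGd : ∀ x, HasDerivAt G
      (aGL (e x + deriv ψ x) * (deriv e x + deriv (⇑ψd) x) - aGL (e x) * deriv e x) x := by
    intro x
    apply HasDerivAt.sub
    · exact (hasDerivAt_AGL (hη1 x)).comp x (hηd x)
    · exact (hasDerivAt_AGL (he1 x)).comp x
        ((hC2.differentiable (by norm_num)) x).hasDerivAt
  have hGc : Continuous G := by
    rw [continuous_iff_continuousAt]
    exact fun x => (hGd x).differentiableAt.continuousAt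
  have hGb : ∀ x, |G x| ≤ ε := by
    intro x
    have := AGL_diff_le hb3 hηb0.le (le_trans (heb x) (by linarith)) (hη x)
    simp only [hG]
    calc |AGL (e x + deriv ψ x) - AGL (e x)| ≤ |e x + deriv ψ x - e x| := this
      _ = |deriv ψ x| := by ring_nf
      _ ≤ ε := hψ' x
  -- chord inequality pointwise
  have hchord : ∀ x, ab * (deriv ψ x) ^ 2 ≤ deriv ψ x * G x := by
    intro x
    rw [hab]
    have := AGL_chord hηb1 (le_trans (heb x) (by linarith)) (hη x)
    simpa [hG] using this
  -- integrability
  have iψdψ : Integrable (fun ξ => ψ ξ * dψ ξ) :=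
    integrable_schwartz_mul ψ dψ.continuous (schwartz_bounded dψ)
  have iT2 : Integrable (fun ξ => ψ ξ * (ξ / 2 * deriv ψ ξ)) := by
    apply integrable_schwartz_mul ψ (g := fun ξ => ξ / 2 * deriv ψ ξ)
      (by fun_prop) (C := SchwartzMap.seminorm ℝ 1 0 ψd / 2)
    intro x
    have := schwartz_mul_x_bounded ψd x
    rw [hψ'eq]
    calc |x / 2 * ψd x| = |x * ψd x / 2| := by ring_nf
      _ = |x * ψd x| / 2 := by rw [abs_div]; norm_num
      _ ≤ SchwartzMap.seminorm ℝ 1 0 ψd / 2 := by linarith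
  have iψsq : Integrable (fun ξ => ψ ξ * ψ ξ) :=
    integrable_schwartz_mul ψ ψ.continuous (schwartz_bounded ψ)
  have iT4 : Integrable (fun ξ => ψ ξ * ((e ξ + deriv ψ ξ) * deriv s ξ)) := by
    apply integrable_schwartz_mul ψ (g := fun ξ => (e ξ + deriv ψ ξ) * deriv s ξ)
      ((hec.add hψ'c).mul hs'c) (C := ηb * SchwartzMap.seminorm ℝ 0 0 sd)
    intro x
    rw [abs_mul]
    apply mul_le_mul (hη x) _ (abs_nonneg _) hηb0.le
    rw [hs'eq]
    exact schwartz_bounded sd x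
  have iT1 : Integrable (fun ξ => ψ ξ * deriv G ξ) := by
    apply (((iψdψ.sub iT2).add (iψsq.const_mul (1/2))).sub iT4).congr
    filter_upwards with ξ
    simp only [Pi.add_apply, Pi.sub_apply]
    rw [heq ξ]
    ring
  have iψ'G : Integrable (fun ξ => deriv ψ ξ * G ξ) := by
    have := integrable_schwartz_mul ψd hGc hGb
    apply this.congr
    filter_upwards with ξ
    rw [hψ'eq]
  have iψG : Integrable (fun ξ => ψ ξ * G ξ) := integrable_schwartz_mul ψ hGc hGb
  have iψ'sq : Integrable (fun ξ => deriv ψ ξ * deriv ψ ξ) := by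
    have := integrable_schwartz_mul ψd ψd.continuous (schwartz_bounded ψd)
    apply this.congr
    filter_upwards with ξ
    rw [hψ'eq]
  have is'sq : Integrable (fun ξ => deriv s ξ * deriv s ξ) := by
    have := integrable_schwartz_mul sd sd.continuous (schwartz_bounded sd)
    apply this.congr
    filter_upwards with ξ
    rw [hs'eq]
  -- IBP 1
  have hGd' : ∀ x, HasDerivAt G (deriv G x) x := by
    intro x
    have h := hGd x
    rw [h.deriv]
    exact h
  have hIBP1 : ∫ ξ : ℝ, ψ ξ * deriv G ξ = -∫ ξ : ℝ, deriv ψ ξ * G ξ := by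
    have := MeasureTheory.integral_mul_deriv_eq_deriv_mul_of_integrable
      (u := ⇑ψ) (u' := fun x => deriv ψ x) (v := G) (v' := fun x => deriv G x)
      (fun x _ => schwartz_hasDerivAt ψ x) (fun x _ => hGd' x) iT1 iψ'G iψG
    exact this
  -- IBP 2
  have hIBP2 : ∫ ξ : ℝ, ψ ξ * (ξ / 2 * deriv ψ ξ) = -(1/4) * ∫ ξ : ℝ, (ψ ξ) ^ 2 := by
    have hv : ∀ x, HasDerivAt (fun y => ψ y * ψ y)
        (deriv ψ x * ψ x + ψ x * deriv ψ x) x :=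
      fun x => (schwartz_hasDerivAt ψ x).mul (schwartz_hasDerivAt ψ x)
    have huv' : Integrable (fun x : ℝ => x * (deriv ψ x * ψ x + ψ x * deriv ψ x)) := by
      apply (iT2.const_mul 4).congr
      filter_upwards with x
      ring
    have hu'v : Integrable (fun x : ℝ => (1:ℝ) * (ψ x * ψ x)) := by
      apply iψsq.congr
      filter_upwards with x
      ring
    have huv : Integrable (fun x : ℝ => x * (ψ x * ψ x)) := by
      have := integrable_schwartz_mul ψ (g := fun x : ℝ => x * ψ x)
        (continuous_id.mul ψ.continuous) (schwartz_mul_x_bounded ψ)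
      apply this.congr
      filter_upwards with x
      ring
    have := MeasureTheory.integral_mul_deriv_eq_deriv_mul_of_integrable
      (u := fun x : ℝ => x) (u' := fun _ => (1:ℝ)) (v := fun x => ψ x * ψ x)
      (v' := fun x => deriv ψ x * ψ x + ψ x * deriv ψ x)
      (fun x _ => hasDerivAt_id x) (fun x _ => hv x) huv' hu'v huv
    have h4 : ∫ x : ℝ, x * (deriv ψ x * ψ x + ψ x * deriv ψ x)
        = 4 * ∫ x : ℝ, ψ x * (x / 2 * deriv ψ x) := by
      rw [← MeasureTheory.integral_const_mul]
      apply MeasureTheory.integral_congr_ae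
      filter_upwards with x
      ring
    have h1 : ∫ x : ℝ, (1:ℝ) * (ψ x * ψ x) = ∫ x : ℝ, (ψ x) ^ 2 := by
      apply MeasureTheory.integral_congr_ae
      filter_upwards with x
      ring
    rw [h4, h1] at this
    linarith
  -- splitting of the main integral
  have hsplit : ∫ ξ : ℝ, ψ ξ * dψ ξ
      = (∫ ξ : ℝ, ψ ξ * deriv G ξ) + (∫ ξ : ℝ, ψ ξ * (ξ / 2 * deriv ψ ξ))
        + (-(1/2) * ∫ ξ : ℝ, ψ ξ * ψ ξ)
        + ∫ ξ : ℝ, ψ ξ * ((e ξ + deriv ψ ξ) * deriv s ξ) := by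
    have hpt : (fun ξ => ψ ξ * dψ ξ) = fun ξ =>
        (ψ ξ * deriv G ξ + ψ ξ * (ξ / 2 * deriv ψ ξ))
        + ((-(1/2)) * (ψ ξ * ψ ξ) + ψ ξ * ((e ξ + deriv ψ ξ) * deriv s ξ)) := by
      funext ξ
      rw [heq ξ]
      ring
    have i12 : Integrable (fun ξ => ψ ξ * deriv G ξ + ψ ξ * (ξ / 2 * deriv (⇑ψ) ξ)) :=
      iT1.add iT2
    have i3 : Integrable (fun ξ => (-(1/2) : ℝ) * (ψ ξ * ψ ξ)) := iψsq.const_mul _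
    have i34 : Integrable (fun ξ => (-(1/2) : ℝ) * (ψ ξ * ψ ξ)
        + ψ ξ * ((e ξ + deriv (⇑ψ) ξ) * deriv (⇑s) ξ)) := i3.add iT4
    rw [hpt, MeasureTheory.integral_add i12 i34,
      MeasureTheory.integral_add iT1 iT2,
      MeasureTheory.integral_add i3 iT4,
      MeasureTheory.integral_const_mul]
    ring
  -- the three estimates
  have hIψψ : ∫ ξ : ℝ, ψ ξ * ψ ξ = ∫ ξ : ℝ, (ψ ξ) ^ 2 := by
    apply MeasureTheory.integral_congr_ae
    filter_upwards with ξ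
    ring
  have hm1 : ab * ∫ ξ : ℝ, (deriv ψ ξ) ^ 2 ≤ ∫ ξ : ℝ, deriv ψ ξ * G ξ := by
    have hsq : Integrable (fun ξ => ab * (deriv ψ ξ) ^ 2) := by
      apply (iψ'sq.const_mul ab).congr
      filter_upwards with ξ
      ring
    have := MeasureTheory.integral_mono hsq iψ'G hchord
    calc ab * ∫ ξ : ℝ, (deriv ψ ξ) ^ 2 = ∫ ξ : ℝ, ab * (deriv ψ ξ) ^ 2 :=
          (MeasureTheory.integral_const_mul _ _).symm
      _ ≤ ∫ ξ : ℝ, deriv ψ ξ * G ξ := this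
  have hm4 : ∫ ξ : ℝ, ψ ξ * ((e ξ + deriv ψ ξ) * deriv s ξ)
      ≤ (ν/4) * (∫ ξ : ℝ, (ψ ξ) ^ 2) + (ηb ^ 2 / ν) * ∫ ξ : ℝ, (deriv s ξ) ^ 2 := by
    have hRint : Integrable (fun ξ => (ν/4) * (ψ ξ * ψ ξ) + (ηb ^ 2 / ν) * (deriv s ξ * deriv s ξ)) :=
      (iψsq.const_mul _).add (is'sq.const_mul _)
    have hptw : ∀ ξ, ψ ξ * ((e ξ + deriv ψ ξ) * deriv s ξ)
        ≤ (ν/4) * (ψ ξ * ψ ξ) + (ηb ^ 2 / ν) * (deriv s ξ * deriv s ξ) := by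
      intro ξ
      have h1 : ψ ξ * ((e ξ + deriv ψ ξ) * deriv s ξ) ≤ ηb * (|ψ ξ| * |deriv s ξ|) := by
        calc ψ ξ * ((e ξ + deriv ψ ξ) * deriv s ξ)
            ≤ |ψ ξ * ((e ξ + deriv ψ ξ) * deriv s ξ)| := le_abs_self _
          _ = |ψ ξ| * (|e ξ + deriv ψ ξ| * |deriv s ξ|) := by rw [abs_mul, abs_mul]
          _ ≤ |ψ ξ| * (ηb * |deriv s ξ|) := by
              apply mul_le_mul_of_nonneg_left _ (abs_nonneg _)
              exact mul_le_mul_of_nonneg_right (hη ξ) (abs_nonneg _)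
          _ = ηb * (|ψ ξ| * |deriv s ξ|) := by ring
      have h2 : ν * (ηb * (|ψ ξ| * |deriv s ξ|))
          ≤ ν * ((ν/4) * (ψ ξ * ψ ξ) + (ηb ^ 2 / ν) * (deriv s ξ * deriv s ξ)) := by
        have hexp : ν * ((ν/4) * (ψ ξ * ψ ξ) + (ηb ^ 2 / ν) * (deriv s ξ * deriv s ξ))
            = ν ^ 2 / 4 * (ψ ξ * ψ ξ) + ηb ^ 2 * (deriv s ξ * deriv s ξ) := by
          field_simp
        rw [hexp]
        nlinarith [sq_nonneg (ν / 2 * |ψ ξ| - ηb * |deriv s ξ|), sq_abs (ψ ξ),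
          sq_abs (deriv s ξ)]
      have h3 := le_of_mul_le_mul_left h2 hν
      linarith
    have := MeasureTheory.integral_mono iT4 hRint hptw
    calc ∫ ξ : ℝ, ψ ξ * ((e ξ + deriv ψ ξ) * deriv s ξ)
        ≤ ∫ ξ : ℝ, ((ν/4) * (ψ ξ * ψ ξ) + (ηb ^ 2 / ν) * (deriv s ξ * deriv s ξ)) := this
      _ = (ν/4) * (∫ ξ : ℝ, (ψ ξ) ^ 2) + (ηb ^ 2 / ν) * ∫ ξ : ℝ, (deriv s ξ) ^ 2 := by
          have e1 : ∫ ξ : ℝ, ψ ξ * ψ ξ = ∫ ξ : ℝ, (ψ ξ) ^ 2 :=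
            MeasureTheory.integral_congr_ae (by filter_upwards with ξ; ring)
          have e2 : ∫ ξ : ℝ, deriv (⇑s) ξ * deriv (⇑s) ξ = ∫ ξ : ℝ, (deriv (⇑s) ξ) ^ 2 :=
            MeasureTheory.integral_congr_ae (by filter_upwards with ξ; ring)
          rw [MeasureTheory.integral_add (iψsq.const_mul _) (is'sq.const_mul _),
            MeasureTheory.integral_const_mul, MeasureTheory.integral_const_mul, e1, e2]
  -- combine
  have hIψ0 : 0 ≤ ∫ ξ : ℝ, (ψ ξ) ^ 2 := MeasureTheory.integral_nonneg fun ξ => sq_nonneg _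
  rw [hsplit, hIBP1, hIBP2, hIψψ]
  have hm1' : -∫ ξ : ℝ, deriv (⇑ψ) ξ * G ξ ≤ -(ab * ∫ ξ : ℝ, (deriv (⇑ψ) ξ) ^ 2) :=
    neg_le_neg hm1
  have hcomb : -(3/2 - ν) * ((1/2) * ∫ ξ : ℝ, (ψ ξ) ^ 2)
      = -(3/4) * (∫ ξ : ℝ, (ψ ξ) ^ 2) + (ν/2) * ∫ ξ : ℝ, (ψ ξ) ^ 2 := by ring
  rw [hcomb]
  linarith [hm4, hm1', hIψ0, mul_nonneg hν.le hIψ0]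


/-- Energy inequality for `E₀(τ) = (1/2)∫ ψ(τ,ξ)² dξ` (Lemma 6.1). -/
theorem energy_inequality_E0
    (ηp ηm : ℝ)
    (hp : ηp ∈ Set.Ioo (-(1 / Real.sqrt 3)) (1 / Real.sqrt 3))
    (hm : ηm ∈ Set.Ioo (-(1 / Real.sqrt 3)) (1 / Real.sqrt 3))
    (hne : ηp ≠ ηm)
    (e : ℝ → ℝ) (he : IsMixingProfile ηp ηm e)
    (η₀ ηb ab ε : ℝ)
    (hη₀ : η₀ = max |ηp| |ηm|) (hηb : ηb = (η₀ + 1 / Real.sqrt 3) / 2)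
    (hab : ab = aGL ηb) (hε : ε = ηb - η₀)
    (τ₁ τ₂ : ℝ) (hτ₁ : 0 ≤ τ₁) (hτ₁₂ : τ₁ ≤ τ₂)
    (Ψ S dΨ dS : ℝ → SchwartzMap ℝ ℝ)
    (hsol : IsSolution212 e Ψ S dΨ dS (Set.Icc τ₁ τ₂))
    (hsmall : ∀ τ ∈ Set.Icc τ₁ τ₂, H2norm (Ψ τ) + H1norm (S τ) ≤ ε) :
    ∀ ν > (0:ℝ), ∃ K₂ > (0:ℝ), ∃ E₀' : ℝ → ℝ,
      ContinuousOn E₀' (Set.Icc τ₁ τ₂) ∧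
      (∀ τ ∈ Set.Icc τ₁ τ₂,
        HasDerivWithinAt (fun t => (1/2) * ∫ ξ : ℝ, (Ψ t ξ) ^ 2)
          (E₀' τ) (Set.Icc τ₁ τ₂) τ) ∧
      (∀ τ ∈ Set.Icc τ₁ τ₂,
        E₀' τ ≤ -(3/2 - ν) * ((1/2) * ∫ ξ : ℝ, (Ψ τ ξ) ^ 2)
          - ab * (∫ ξ : ℝ, (deriv (Ψ τ) ξ) ^ 2)
          + K₂ * ∫ ξ : ℝ, (deriv (S τ) ξ) ^ 2) := by
  intro ν hν
  obtain ⟨hsolΨ, hsolS, hsoldΨ, hsoldS, hderΨ, hderS, heqΨ, heqS⟩ := hsol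
  have h3p : 0 < Real.sqrt 3 := Real.sqrt_pos.2 (by norm_num)
  have h130 : 0 < (1 / Real.sqrt 3 : ℝ) := by positivity
  have hη₀lt : η₀ < 1 / Real.sqrt 3 := by
    rw [hη₀]
    exact max_lt (abs_lt.2 ⟨hp.1, hp.2⟩) (abs_lt.2 ⟨hm.1, hm.2⟩)
  have hη₀0 : 0 ≤ η₀ := by
    rw [hη₀]
    exact le_trans (abs_nonneg ηp) (le_max_left _ _)
  have hηb0 : 0 < ηb := by rw [hηb]; linarith
  have hb3 : ηb < 1 / Real.sqrt 3 := by rw [hηb]; linarith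
  have hεb : η₀ + ε = ηb := by rw [hε]; ring
  have heb : ∀ ξ, |e ξ| ≤ η₀ := by rw [hη₀]; exact profile_abs_le hne he
  have hC2 : ContDiff ℝ 2 e := he.1
  obtain ⟨hcont, hder⟩ := stepA hτ₁₂ hsolΨ hsoldΨ hderΨ
  refine ⟨ηb ^ 2 / ν, div_pos (pow_pos hηb0 2) hν,
    fun τ => ∫ ξ : ℝ, Ψ τ ξ * dΨ τ ξ, hcont, hder, ?_⟩
  intro τ hτ
  have hH2 : H2norm (Ψ τ) ≤ ε := by
    have h1 := hsmall τ hτ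
    have h2 : 0 ≤ H1norm (S τ) := Real.sqrt_nonneg _
    linarith
  have hψ' : ∀ ξ, |deriv (Ψ τ) ξ| ≤ ε := fun ξ =>
    le_trans (sobolev_deriv_abs_le (Ψ τ) ξ) hH2
  exact stepB hC2 hη₀0 hηb0 hb3 hεb hab hν heb (Ψ τ) (S τ) (dΨ τ) hψ' (heqΨ τ hτ)
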